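/- Let P be a probability measure and let A, H, B, K be measurable events with P(H) > 0 and P(K) > 0. Set x = P(A|H), y = P(B|K), and z = P((A∩H) ∪ (B∩K) | H ∪ K). Then T₀ᴴ(x,y) ≤ z ≤ min(x + y, 1), where T₀ᴴ(x,y) = xy/(x + y − xy) if (x,y) ≠ (0,0) and T₀ᴴ(0,0) = 0. -/

import Mathlib

open MeasureTheory Set

/-- Conditional probability `P(E|H) = P(E ∩ H)/P(H)` as a real number. -/
noncomputable def condP {Ω : Type*} [MeasurableSpace Ω] (μ : Measure Ω) (E H : Set Ω) : ℝ :=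
  (μ (E ∩ H)).toReal / (μ H).toReal

theorem quasi_disjunction_bounds {Ω : Type*} [MeasurableSpace Ω]
    (μ : Measure Ω) [IsProbabilityMeasure μ] (A H B K : Set Ω)
    (hA : MeasurableSet A) (hH : MeasurableSet H) (hB : MeasurableSet B) (hK : MeasurableSet K)
    (hHpos : 0 < μ H) (hKpos : 0 < μ K)
    (x y z : ℝ) (hx : x = condP μ A H) (hy : y = condP μ B K)
    (hz : z = condP μ ((A ∩ H) ∪ (B ∩ K)) (H ∪ K)) :
    (if (x, y) = ((0 : ℝ), (0 : ℝ)) then 0 else x * y / (x + y - x * y)) ≤ z ∧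
      z ≤ min (x + y) 1 := by
  have sU : ((A ∩ H) ∪ (B ∩ K)) ∩ (H ∪ K) = (A ∩ H) ∪ (B ∩ K) :=
    inter_eq_left.mpr (union_subset_union inter_subset_right inter_subset_right)
  rw [condP] at hx hy hz
  rw [sU] at hz
  set a := (μ (A ∩ H)).toReal with ha
  set h := (μ H).toReal with hh
  set b := (μ (B ∩ K)).toReal with hb
  set k := (μ K).toReal with hk
  set n := (μ ((A ∩ H) ∪ (B ∩ K))).toReal with hn
  set d := (μ (H ∪ K)).toReal with hd
  have hpos : 0 < h := ENNReal.toReal_pos hHpos.ne' (measure_ne_top μ H)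
  have kpos : 0 < k := ENNReal.toReal_pos hKpos.ne' (measure_ne_top μ K)
  have dpos : 0 < d :=
    ENNReal.toReal_pos (lt_of_lt_of_le hHpos (measure_mono subset_union_left)).ne'
      (measure_ne_top μ _)
  have a0 : 0 ≤ a := ENNReal.toReal_nonneg
  have b0 : 0 ≤ b := ENNReal.toReal_nonneg
  have n0 : 0 ≤ n := ENNReal.toReal_nonneg
  have a_le_h : a ≤ h :=
    ENNReal.toReal_mono (measure_ne_top μ H) (measure_mono inter_subset_right)
  have b_le_k : b ≤ k :=
    ENNReal.toReal_mono (measure_ne_top μ K) (measure_mono inter_subset_right)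
  have a_le_n : a ≤ n :=
    ENNReal.toReal_mono (measure_ne_top μ _) (measure_mono subset_union_left)
  have b_le_n : b ≤ n :=
    ENNReal.toReal_mono (measure_ne_top μ _) (measure_mono subset_union_right)
  have n_le_d : n ≤ d :=
    ENNReal.toReal_mono (measure_ne_top μ _)
      (measure_mono (union_subset_union inter_subset_right inter_subset_right))
  have h_le_d : h ≤ d :=
    ENNReal.toReal_mono (measure_ne_top μ _) (measure_mono subset_union_left)
  have k_le_d : k ≤ d :=
    ENNReal.toReal_mono (measure_ne_top μ _) (measure_mono subset_union_right)
  have n_le_ab : n ≤ a + b := by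
    have := ENNReal.toReal_mono
      (ENNReal.add_ne_top.mpr ⟨measure_ne_top μ _, measure_ne_top μ _⟩)
      (measure_union_le (μ := μ) (A ∩ H) (B ∩ K))
    rwa [ENNReal.toReal_add (measure_ne_top μ _) (measure_ne_top μ _)] at this
  -- key covering inequality: d ≤ n + (h - a) + (k - b)
  have h1 : (μ (H \ (A ∩ H))).toReal = h - a := by
    rw [measure_diff inter_subset_right (hA.inter hH).nullMeasurableSet (measure_ne_top μ _),
      ENNReal.toReal_sub_of_le (measure_mono inter_subset_right) (measure_ne_top μ H)]
  have h2 : (μ (K \ (B ∩ K))).toReal = k - b := by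
    rw [measure_diff inter_subset_right (hB.inter hK).nullMeasurableSet (measure_ne_top μ _),
      ENNReal.toReal_sub_of_le (measure_mono inter_subset_right) (measure_ne_top μ K)]
  have cover : H ∪ K ⊆ ((A ∩ H) ∪ (B ∩ K)) ∪ ((H \ (A ∩ H)) ∪ (K \ (B ∩ K))) := by
    intro ω hω
    simp only [Set.mem_union, Set.mem_diff, Set.mem_inter_iff] at *
    tauto
  have hmeas : μ (H ∪ K) ≤ μ ((A ∩ H) ∪ (B ∩ K)) + (μ (H \ (A ∩ H)) + μ (K \ (B ∩ K))) :=
    (measure_mono cover).trans ((measure_union_le _ _).trans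
      (add_le_add le_rfl (measure_union_le _ _)))
  have hd_le : d ≤ n + ((h - a) + (k - b)) := by
    have := ENNReal.toReal_mono
      (by
        refine ENNReal.add_ne_top.mpr ⟨measure_ne_top μ _, ?_⟩
        exact ENNReal.add_ne_top.mpr ⟨measure_ne_top μ _, measure_ne_top μ _⟩) hmeas
    rwa [ENNReal.toReal_add (measure_ne_top μ _)
        (ENNReal.add_ne_top.mpr ⟨measure_ne_top μ _, measure_ne_top μ _⟩),
      ENNReal.toReal_add (measure_ne_top μ _) (measure_ne_top μ _), h1, h2] at this
  subst hx hy hz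
  constructor
  · -- lower bound
    by_cases hcase : ((a / h, b / k) : ℝ × ℝ) = ((0 : ℝ), (0 : ℝ))
    · rw [if_pos hcase]
      positivity
    · rw [if_neg hcase]
      by_cases ha0 : a = 0
      · have hb0 : b ≠ 0 := by
          intro hb0
          exact hcase (by simp [ha0, hb0])
        have h0 : a / h * (b / k) = 0 := by simp [ha0]
        rw [h0, zero_div]
        positivity
      · by_cases hb0 : b = 0
        · have h0 : a / h * (b / k) = 0 := by simp [hb0]
          rw [h0, zero_div]
          positivity
        · -- main case: a > 0 and b > 0
          have apos : 0 < a := lt_of_le_of_ne a0 (Ne.symm ha0)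
          have bpos : 0 < b := lt_of_le_of_ne b0 (Ne.symm hb0)
          have npos : 0 < n := lt_of_lt_of_le apos a_le_n
          have denpos : 0 < a * k + b * h - a * b := by nlinarith
          have key : a * b / (a * k + b * h - a * b) ≤ n / d := by
            rw [div_le_div_iff₀ denpos dpos]
            nlinarith [mul_nonneg (mul_nonneg (sub_nonneg.mpr a_le_n) b0) (sub_nonneg.mpr a_le_h),
              mul_nonneg (mul_nonneg (sub_nonneg.mpr b_le_n) a0) (sub_nonneg.mpr b_le_k),
              mul_nonneg (mul_nonneg a0 b0) (sub_nonneg.mpr hd_le)]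
          have heq : a / h * (b / k) / (a / h + b / k - a / h * (b / k))
              = a * b / (a * k + b * h - a * b) := by
            rw [div_eq_div_iff]
            · field_simp
            · have hden2 : a / h + b / k - a / h * (b / k)
                  = (a * k + b * h - a * b) / (h * k) := by
                field_simp
              rw [hden2]
              positivity
            · exact denpos.ne'
          rw [heq]
          exact key
  · -- upper bound
    refine le_min ?_ ?_
    · calc n / d ≤ (a + b) / d := by gcongr
        _ = a / d + b / d := add_div a b d
        _ ≤ a / h + b / k := by gcongr
    · rw [div_le_one dpos]
      exact n_le_d
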